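/- Let x_1, x_2, z be pairwise distinct nonnegative integers. The 3-heap Antonim position (x_1, x_2, z) is a P-position if and only if the 3-heap Nim position (x_1+1, x_2+1, z+1) is a P-position, i.e., if and only if (x_1+1) XOR (x_2+1) XOR (z+1) = 0, where XOR denotes bitwise exclusive or on nonnegative integers. -/

import Mathlib

/-- A legal move in Antonim: strictly decrease one coordinate, keeping all
entries pairwise distinct (injective). -/
def AntonimMove {n : ℕ} (x y : Fin n → ℕ) : Prop :=
  Function.Injective y ∧ ∃ i : Fin n, y i < x i ∧ ∀ j : Fin n, j ≠ i → y j = x j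

/-- A position is a P-position iff every legal move from it leads to a
non-P-position. -/
def AntonimP {n : ℕ} (x : Fin n → ℕ) : Prop :=
  ∀ y : Fin n → ℕ, AntonimMove x y → ¬ AntonimP y
termination_by ∑ i, x i
decreasing_by
  rename_i hmove
  obtain ⟨_, i, hlt, heq⟩ := hmove
  apply Finset.sum_lt_sum
  · intro j _
    by_cases hj : j = i
    · subst hj; exact le_of_lt hlt
    · exact le_of_eq (heq j hj)
  · exact ⟨i, Finset.mem_univ i, hlt⟩

lemma antonim_xh1 {a b : ℕ} (h : a = b ^^^ a) : b = 0 := by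
  have h2 : b ^^^ a = 0 ^^^ a := by rw [Nat.zero_xor, ← h]
  exact Nat.xor_left_injective h2

lemma antonim_xh2 {a b : ℕ} (h : a = a ^^^ b) : b = 0 := by
  have h2 : a ^^^ b = a ^^^ 0 := by rw [Nat.xor_zero, ← h]
  exact Nat.xor_right_injective h2

lemma antonim_xlc (a b c : ℕ) : a ^^^ (b ^^^ c) = b ^^^ (a ^^^ c) := by
  rw [← Nat.xor_assoc, Nat.xor_comm a b, Nat.xor_assoc]

lemma antonim_inj3 {a b c : ℕ} (hab : a ≠ b) (hac : a ≠ c) (hbc : b ≠ c) :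
    Function.Injective ![a, b, c] := by
  intro i j hij
  fin_cases i <;> fin_cases j <;> simp_all

lemma antonim_key : ∀ N (x : Fin 3 → ℕ), ∑ i, x i ≤ N → Function.Injective x →
    (AntonimP x ↔ (x 0 + 1) ^^^ (x 1 + 1) ^^^ (x 2 + 1) = 0) := by
  intro N
  induction N with
  | zero =>
    intro x hsum hinj
    rw [Fin.sum_univ_three] at hsum
    exact absurd (hinj (a₁ := 0) (a₂ := 1) (by omega)) (by decide)
  | succ N IH =>
    intro x hsum hinj
    have h01 : x 0 ≠ x 1 := fun h => absurd (hinj h) (by decide)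
    have h02 : x 0 ≠ x 2 := fun h => absurd (hinj h) (by decide)
    have h12 : x 1 ≠ x 2 := fun h => absurd (hinj h) (by decide)
    have sum_le : ∀ y : Fin 3 → ℕ, (∃ i, y i < x i ∧ ∀ j, j ≠ i → y j = x j) →
        ∑ i, y i ≤ N := by
      rintro y ⟨i, hlt, heq⟩
      have hlt' : ∑ j, y j < ∑ j, x j := by
        apply Finset.sum_lt_sum
        · intro j _
          by_cases hj : j = i
          · subst hj; exact le_of_lt hlt
          · exact le_of_eq (heq j hj)
        · exact ⟨i, Finset.mem_univ i, hlt⟩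
      omega
    constructor
    · intro hP
      by_contra hxor
      rw [AntonimP] at hP
      rcases Nat.xor_trichotomy hxor with h | h | h
      · -- reduce coordinate 0
        set v := (x 1 + 1) ^^^ (x 2 + 1) with hv
        have hv1 : 1 ≤ v := by
          have : v ≠ 0 := (not_congr xor_eq_zero_iff).2 (by omega)
          omega
        have hne1 : v - 1 ≠ x 1 := by
          intro hc
          have hvv : v = x 1 + 1 := by omega
          have : x 2 + 1 = 0 := antonim_xh2 (hvv.symm.trans hv)
          omega
        have hne2 : v - 1 ≠ x 2 := by
          intro hc
          have hvv : v = x 2 + 1 := by omega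
          have : x 1 + 1 = 0 := antonim_xh1 (hvv.symm.trans hv)
          omega
        have hmove : AntonimMove x ![v - 1, x 1, x 2] := by
          refine ⟨antonim_inj3 hne1 hne2 h12, 0, ?_, ?_⟩
          · show v - 1 < x 0; omega
          · intro j hj; fin_cases j
            · exact absurd rfl hj
            · rfl
            · rfl
        have hmove' : ∃ i, (![v - 1, x 1, x 2]) i < x i ∧
            ∀ j, j ≠ i → (![v - 1, x 1, x 2]) j = x j := hmove.2
        have hPy : AntonimP ![v - 1, x 1, x 2] := by
          rw [IH _ (sum_le _ hmove') hmove.1]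
          show (v - 1 + 1) ^^^ (x 1 + 1) ^^^ (x 2 + 1) = 0
          rw [show v - 1 + 1 = v from by omega, hv]
          simp [Nat.xor_assoc, Nat.xor_comm, antonim_xlc, Nat.xor_self,
            xor_cancel_left, xor_cancel_right]
        exact hP _ hmove hPy
      · -- reduce coordinate 1
        set v := (x 2 + 1) ^^^ (x 0 + 1) with hv
        have hv1 : 1 ≤ v := by
          have : v ≠ 0 := (not_congr xor_eq_zero_iff).2 (by omega)
          omega
        have hne0 : x 0 ≠ v - 1 := by
          intro hc
          have hvv : v = x 0 + 1 := by omega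
          have : x 2 + 1 = 0 := antonim_xh1 (hvv.symm.trans hv)
          omega
        have hne2 : v - 1 ≠ x 2 := by
          intro hc
          have hvv : v = x 2 + 1 := by omega
          have : x 0 + 1 = 0 := antonim_xh2 (hvv.symm.trans hv)
          omega
        have hmove : AntonimMove x ![x 0, v - 1, x 2] := by
          refine ⟨antonim_inj3 hne0 h02 hne2, 1, ?_, ?_⟩
          · show v - 1 < x 1; omega
          · intro j hj; fin_cases j
            · rfl
            · exact absurd rfl hj
            · rfl
        have hmove' : ∃ i, (![x 0, v - 1, x 2]) i < x i ∧
            ∀ j, j ≠ i → (![x 0, v - 1, x 2]) j = x j := hmove.2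
        have hPy : AntonimP ![x 0, v - 1, x 2] := by
          rw [IH _ (sum_le _ hmove') hmove.1]
          show (x 0 + 1) ^^^ (v - 1 + 1) ^^^ (x 2 + 1) = 0
          rw [show v - 1 + 1 = v from by omega, hv]
          simp [Nat.xor_assoc, Nat.xor_comm, antonim_xlc, Nat.xor_self,
            xor_cancel_left, xor_cancel_right]
        exact hP _ hmove hPy
      · -- reduce coordinate 2
        set v := (x 0 + 1) ^^^ (x 1 + 1) with hv
        have hv1 : 1 ≤ v := by
          have : v ≠ 0 := (not_congr xor_eq_zero_iff).2 (by omega)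
          omega
        have hne0 : x 0 ≠ v - 1 := by
          intro hc
          have hvv : v = x 0 + 1 := by omega
          have : x 1 + 1 = 0 := antonim_xh2 (hvv.symm.trans hv)
          omega
        have hne1 : x 1 ≠ v - 1 := by
          intro hc
          have hvv : v = x 1 + 1 := by omega
          have : x 0 + 1 = 0 := antonim_xh1 (hvv.symm.trans hv)
          omega
        have hmove : AntonimMove x ![x 0, x 1, v - 1] := by
          refine ⟨antonim_inj3 h01 hne0 hne1, 2, ?_, ?_⟩
          · show v - 1 < x 2; omega
          · intro j hj; fin_cases j
            · rfl
            · rfl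
            · exact absurd rfl hj
        have hmove' : ∃ i, (![x 0, x 1, v - 1]) i < x i ∧
            ∀ j, j ≠ i → (![x 0, x 1, v - 1]) j = x j := hmove.2
        have hPy : AntonimP ![x 0, x 1, v - 1] := by
          rw [IH _ (sum_le _ hmove') hmove.1]
          show (x 0 + 1) ^^^ (x 1 + 1) ^^^ (v - 1 + 1) = 0
          rw [show v - 1 + 1 = v from by omega, hv]
          simp [Nat.xor_assoc, Nat.xor_comm, antonim_xlc, Nat.xor_self,
            xor_cancel_left, xor_cancel_right]
        exact hP _ hmove hPy
    · intro hxor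
      rw [AntonimP]
      rintro y ⟨hinjy, i, hlt, heq⟩ hPy
      have hxory : (y 0 + 1) ^^^ (y 1 + 1) ^^^ (y 2 + 1) = 0 :=
        (IH y (sum_le y ⟨i, hlt, heq⟩) hinjy).mp hPy
      have e0 : (x 0 + 1) ^^^ (x 1 + 1) = x 2 + 1 := by
        rwa [xor_eq_zero_iff] at hxor
      fin_cases i
      · have e1 : y 1 = x 1 := heq 1 (by decide)
        have e2 : y 2 = x 2 := heq 2 (by decide)
        rw [e1, e2] at hxory
        rw [xor_eq_zero_iff] at hxory
        have : y 0 + 1 = x 0 + 1 :=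
          Nat.xor_left_injective (hxory.trans e0.symm)
        have hlt' : y 0 < x 0 := hlt
        omega
      · have e1 : y 0 = x 0 := heq 0 (by decide)
        have e2 : y 2 = x 2 := heq 2 (by decide)
        rw [e1, e2] at hxory
        rw [xor_eq_zero_iff] at hxory
        have : y 1 + 1 = x 1 + 1 :=
          Nat.xor_right_injective (hxory.trans e0.symm)
        have hlt' : y 1 < x 1 := hlt
        omega
      · have e1 : y 0 = x 0 := heq 0 (by decide)
        have e2 : y 1 = x 1 := heq 1 (by decide)
        rw [e1, e2] at hxory
        rw [xor_eq_zero_iff] at hxory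
        have : y 2 + 1 = x 2 + 1 := hxory.symm.trans e0
        have hlt' : y 2 < x 2 := hlt
        omega

theorem antonim_three_heap_iff_nim (x₁ x₂ z : ℕ)
    (h₁₂ : x₁ ≠ x₂) (h₁z : x₁ ≠ z) (h₂z : x₂ ≠ z) :
    AntonimP ![x₁, x₂, z] ↔ (x₁ + 1) ^^^ (x₂ + 1) ^^^ (z + 1) = 0 := by
  have h := antonim_key (x₁ + x₂ + z) ![x₁, x₂, z]
    (by rw [Fin.sum_univ_three]; simp) (antonim_inj3 h₁₂ h₁z h₂z)
  simpa using h
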